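/- Let S be a semigroupoid, (α,X) a partial action of S, and (β,E) the global action on E = D/≈ from the universal globalization construction. Define δ : X → E by δ(x) = [δ,x]. Then the triple (δ,β,E) is a universal globalization of (α,X): δ is an embedding of partial actions, and for every morphism of partial actions φ : (α,X) → (θ,Y) with (θ,Y) a global action, there exists a unique morphism of partial actions Φ : (β,E) → (θ,Y) with Φ∘δ = φ. -/

import Mathlib

universe u v w

/-- An (Exel) semigroupoid: a set `S` with a set of composable pairs (encoded by
the relation `comp`) and a multiplication, associative in Exel's sense. -/
structure Semigroupoid (S : Type u) where
  comp : S → S → Prop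
  mul : S → S → S
  assoc : ∀ s t r : S,
    ((comp s t ∧ comp t r) ∨ (comp s t ∧ comp (mul s t) r) ∨ (comp t r ∧ comp s (mul t r))) →
      comp s t ∧ comp t r ∧ comp (mul s t) r ∧ comp s (mul t r) ∧
        mul (mul s t) r = mul s (mul t r)

namespace Semigroupoid

variable {S : Type u} {X : Type v}

/-- `S^s = {t | (s,t) ∈ S⁽²⁾}`. -/
def rightComp (G : Semigroupoid S) (s : S) : Set S := {t | G.comp s t}

/-- `X_s = α_s(ₛX)`. -/
def img (dom : S → Set X) (act : S → X → X) (s : S) : Set X := act s '' dom s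

/-- Condition (P1): `α_t⁻¹(ₛX ∩ X_t) = ₜX ∩ ₛₜX` for composable `(s,t)`. -/
def P1 (G : Semigroupoid S) (dom : S → Set X) (act : S → X → X) : Prop :=
  ∀ s t : S, G.comp s t →
    {x | x ∈ dom t ∧ act t x ∈ dom s ∩ img dom act t} = dom t ∩ dom (G.mul s t)

/-- Condition (P2): `α_s ∘ α_t = α_{st}` on `ₜX ∩ ₛₜX` for composable `(s,t)`. -/
def P2 (G : Semigroupoid S) (dom : S → Set X) (act : S → X → X) : Prop :=
  ∀ s t : S, G.comp s t → ∀ x ∈ dom t ∩ dom (G.mul s t),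
    act s (act t x) = act (G.mul s t) x

/-- A partial action of the semigroupoid on `X`. -/
def IsPartialAction (G : Semigroupoid S) (dom : S → Set X) (act : S → X → X) : Prop :=
  P1 G dom act ∧ P2 G dom act

/-- Condition (G1): if `S^s = S^t ≠ ∅` then `ₛX = ₜX`. -/
def G1 (G : Semigroupoid S) (dom : S → Set X) : Prop :=
  ∀ s t : S, G.rightComp s = G.rightComp t → (G.rightComp s).Nonempty → dom s = dom t

/-- Condition (G2): if `(s,t) ∈ S⁽²⁾` then `ₜX = ₛₜX`. -/
def G2 (G : Semigroupoid S) (dom : S → Set X) : Prop :=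
  ∀ s t : S, G.comp s t → dom t = dom (G.mul s t)

/-- A global action of the semigroupoid on `X`. -/
def IsGlobalAction (G : Semigroupoid S) (dom : S → Set X) (act : S → X → X) : Prop :=
  IsPartialAction G dom act ∧ G1 G dom ∧ G2 G dom

/-- A partial action is non-degenerate when `X = ⋃ₛ (ₛX ∪ X_s)`. -/
def Nondegenerate (G : Semigroupoid S) (dom : S → Set X) (act : S → X → X) : Prop :=
  (⋃ s : S, dom s ∪ img dom act s) = Set.univ

section Morphisms

variable {Y : Type w}

/-- A morphism of partial actions `φ : (α,X) → (β,Y)`. -/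
def IsMorphism (G : Semigroupoid S) (domX : S → Set X) (actX : S → X → X)
    (domY : S → Set Y) (actY : S → Y → Y) (φ : X → Y) : Prop :=
  ∀ s : S, (∀ x ∈ domX s, φ x ∈ domY s) ∧ (∀ x ∈ domX s, φ (actX s x) = actY s (φ x))

/-- An embedding of partial actions. -/
def IsEmbedding (G : Semigroupoid S) (domX : S → Set X) (actX : S → X → X)
    (domY : S → Set Y) (actY : S → Y → Y) (φ : X → Y) : Prop :=
  Function.Injective φ ∧ IsMorphism G domX actX domY actY φ ∧
    ∀ s : S, domX s = {x | φ x ∈ domY s ∧ actY s (φ x) ∈ Set.range φ}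

end Morphisms

/-- The relation `∼` on `S`: `s ∼ t` iff `s = t`, or `S^s = S^t ≠ ∅`, or `s = ut`. -/
def simRel (G : Semigroupoid S) (s t : S) : Prop :=
  s = t ∨ (G.rightComp s = G.rightComp t ∧ (G.rightComp s).Nonempty) ∨
    ∃ u : S, G.comp u t ∧ s = G.mul u t

/-- `R`: the smallest equivalence relation containing `∼`. -/
def Rrel (G : Semigroupoid S) : S → S → Prop := Relation.EqvGen (simRel G)

/-- `₍ρₛ₎X = ⋃ ({ₜX : t R s} ∪ {X_t : t ∈ S^s})`. -/
def rhoDom (G : Semigroupoid S) (dom : S → Set X) (act : S → X → X) (s : S) : Set X :=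
  {x | (∃ t : S, Rrel G t s ∧ x ∈ dom t) ∨ (∃ t : S, G.comp s t ∧ x ∈ img dom act t)}

/-- The set `D ⊆ S^δ × X`, where `S^δ = S ∪ {δ}` is encoded as `Option S`
(with `none` playing the role of the extra symbol `δ`). -/
def DSet (G : Semigroupoid S) (dom : S → Set X) (act : S → X → X) : Set (Option S × X) :=
  {p | ∀ s : S, p.1 = some s → p.2 ∈ rhoDom G dom act s}

theorem noneMem (G : Semigroupoid S) (dom : S → Set X) (act : S → X → X) (x : X) :
    ((none : Option S), x) ∈ DSet G dom act := by
  intro s h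
  simp at h

/-- Generating relation for `≈`:
(1) `(δ, α_s x) ∼ (s, x)` for `x ∈ ₛX`;
(2) `(tu, x) ∼ (t, α_u x)` for `u ∈ S^t` and `x ∈ ᵤX`. -/
def preRel (G : Semigroupoid S) (dom : S → Set X) (act : S → X → X) :
    Option S × X → Option S × X → Prop := fun p q =>
  (∃ (s : S) (x : X), x ∈ dom s ∧ p = (none, act s x) ∧ q = (some s, x)) ∨
  (∃ (t u : S) (x : X), G.comp t u ∧ x ∈ dom u ∧
      p = (some (G.mul t u), x) ∧ q = (some t, act u x))

/-- `≈`: the smallest equivalence relation containing the generating relation. -/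
def approx (G : Semigroupoid S) (dom : S → Set X) (act : S → X → X) :
    Option S × X → Option S × X → Prop :=
  Relation.EqvGen (preRel G dom act)

/-- The setoid on `D` induced by `≈`. -/
def DSetoid (G : Semigroupoid S) (dom : S → Set X) (act : S → X → X) :
    Setoid (DSet G dom act) :=
  Setoid.comap Subtype.val (Relation.EqvGen.setoid (preRel G dom act))

/-- `E = D/≈`. -/
def EType (G : Semigroupoid S) (dom : S → Set X) (act : S → X → X) : Type _ :=
  Quotient (DSetoid G dom act)

/-- The class `[a,x] ∈ E` of `(a,x) ∈ D`. -/
def mkE (G : Semigroupoid S) (dom : S → Set X) (act : S → X → X)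
    (p : DSet G dom act) : EType G dom act :=
  Quotient.mk (DSetoid G dom act) p

/-- `ₛE = {[a,x] : (a,x) ≈ (t,y) for some t ∈ S^s} ∪ {[δ,x] : x ∈ ₍ρₛ₎X}`. -/
def domE (G : Semigroupoid S) (dom : S → Set X) (act : S → X → X) (s : S) :
    Set (EType G dom act) :=
  {e | (∃ (p : DSet G dom act) (t : S) (y : X),
          G.comp s t ∧ approx G dom act p.val (some t, y) ∧ e = mkE G dom act p) ∨
       (∃ x : X, x ∈ rhoDom G dom act s ∧
          e = mkE G dom act ⟨(none, x), noneMem G dom act x⟩)}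

/-- `δ : X → E`, `x ↦ [δ,x]`. -/
def deltaMap (G : Semigroupoid S) (dom : S → Set X) (act : S → X → X) (x : X) :
    EType G dom act :=
  mkE G dom act ⟨(none, x), noneMem G dom act x⟩

section Aux

variable {S : Type u} {X : Type v} (G : Semigroupoid S) (dom : S → Set X) (act : S → X → X)

open Classical in
/-- Evaluation invariant: `E(δ,x) = some x`, `E(s,x) = some (act s x)` if `x ∈ dom s`. -/
noncomputable def Einv : Option S × X → Option X := fun p =>
  match p with
  | (none, x) => some x
  | (some s, x) => if x ∈ dom s then some (act s x) else none

theorem einv_pre (hα : IsPartialAction G dom act) {p q : Option S × X}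
    (h : preRel G dom act p q) : Einv dom act p = Einv dom act q := by
  classical
  rcases h with ⟨s, x, hx, rfl, rfl⟩ | ⟨t, u, x, htu, hx, rfl, rfl⟩
  · simp [Einv, hx]
  · have hP1 := Set.ext_iff.mp (hα.1 t u htu) x
    by_cases hm : x ∈ dom (G.mul t u)
    · have h1 : act u x ∈ dom t := (hP1.mpr ⟨hx, hm⟩).2.1
      simp only [Einv, hm, h1, if_true]
      exact congrArg some (hα.2 t u htu x ⟨hx, hm⟩).symm
    · have h1 : act u x ∉ dom t := fun ht =>
        hm (hP1.mp ⟨hx, ht, ⟨x, hx, rfl⟩⟩).2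
      simp [Einv, hm, h1]

theorem einv_eqv (hα : IsPartialAction G dom act) {p q : Option S × X}
    (h : approx G dom act p q) : Einv dom act p = Einv dom act q := by
  induction h with
  | rel _ _ h => exact einv_pre G dom act hα h
  | refl => rfl
  | symm _ _ _ ih => exact ih.symm
  | trans _ _ _ _ _ ih1 ih2 => exact ih1.trans ih2

theorem mem_rhoDom_self {s : S} {x : X} (hx : x ∈ dom s) : x ∈ rhoDom G dom act s :=
  Or.inl ⟨s, Relation.EqvGen.refl s, hx⟩

theorem rrel_right {t u : S} (htu : G.comp t u) : Rrel G u (G.mul t u) :=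
  Relation.EqvGen.symm _ _ (Relation.EqvGen.rel _ _ (Or.inr (Or.inr ⟨t, htu, rfl⟩)))

theorem mem_DSet_some {s : S} {x : X} (hx : x ∈ rhoDom G dom act s) :
    ((some s, x) : Option S × X) ∈ DSet G dom act := by
  intro s' h
  cases h
  exact hx

theorem pre_mem_DSet {p q : Option S × X} (h : preRel G dom act p q) :
    p ∈ DSet G dom act ∧ q ∈ DSet G dom act := by
  rcases h with ⟨s, x, hx, rfl, rfl⟩ | ⟨t, u, x, htu, hx, rfl, rfl⟩
  · exact ⟨noneMem G dom act _, mem_DSet_some G dom act (mem_rhoDom_self G dom act hx)⟩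
  · refine ⟨mem_DSet_some G dom act (Or.inl ⟨u, rrel_right G htu, hx⟩),
      mem_DSet_some G dom act (Or.inr ⟨u, htu, ⟨x, hx, rfl⟩⟩)⟩

theorem eqv_mem_DSet {p q : Option S × X} (h : approx G dom act p q) :
    (p ∈ DSet G dom act ↔ q ∈ DSet G dom act) := by
  induction h with
  | rel _ _ h => exact ⟨fun _ => (pre_mem_DSet G dom act h).2,
      fun _ => (pre_mem_DSet G dom act h).1⟩
  | refl => exact Iff.rfl
  | symm _ _ _ ih => exact ih.symm
  | trans _ _ _ _ _ ih1 ih2 => exact ih1.trans ih2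

theorem approx_delta {s : S} {x : X} (hx : x ∈ dom s) :
    approx G dom act (none, act s x) (some s, x) :=
  Relation.EqvGen.rel _ _ (Or.inl ⟨s, x, hx, rfl, rfl⟩)

theorem approx_symm {p q : Option S × X} (h : approx G dom act p q) :
    approx G dom act q p := Relation.EqvGen.symm _ _ h

theorem mkE_eq {p q : DSet G dom act} (h : approx G dom act p.val q.val) :
    mkE G dom act p = mkE G dom act q :=
  Quotient.sound h

theorem mkE_exact {p q : DSet G dom act} (h : mkE G dom act p = mkE G dom act q) :
    approx G dom act p.val q.val :=
  Quotient.exact h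

section Global

variable {Z : Type w} (domZ : S → Set Z) (actZ : S → Z → Z)

theorem domZ_eq_of_R (hZ : IsGlobalAction G domZ actZ) {t s : S} (h : Rrel G t s) :
    domZ t = domZ s := by
  induction h with
  | rel a b hab =>
    rcases hab with rfl | ⟨he, hne⟩ | ⟨u, hu, rfl⟩
    · rfl
    · exact hZ.2.1 a b he hne
    · exact (hZ.2.2 u b hu).symm
  | refl => rfl
  | symm _ _ _ ih => exact ih.symm
  | trans _ _ _ _ _ ih1 ih2 => exact ih1.trans ih2

theorem actZ_mem (hZ : IsGlobalAction G domZ actZ) {s t : S} (hst : G.comp s t)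
    {z : Z} (hz : z ∈ domZ t) : actZ t z ∈ domZ s := by
  have h2 : domZ t = domZ (G.mul s t) := hZ.2.2 s t hst
  have := Set.ext_iff.mp (hZ.1.1 s t hst) z
  exact (this.mpr ⟨hz, h2 ▸ hz⟩).2.1

theorem phi_mem (hZ : IsGlobalAction G domZ actZ) {φ : X → Z}
    (hφ : IsMorphism G dom act domZ actZ φ) {s : S} {x : X}
    (hx : x ∈ rhoDom G dom act s) : φ x ∈ domZ s := by
  rcases hx with ⟨t, htR, hxt⟩ | ⟨t, hst, w, hw, rfl⟩
  · exact (domZ_eq_of_R G domZ actZ hZ htR) ▸ (hφ t).1 x hxt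
  · rw [(hφ t).2 w hw]
    exact actZ_mem G domZ actZ hZ hst ((hφ t).1 w hw)

/-- The candidate factorization on raw pairs. -/
def fZ (φ : X → Z) : Option S × X → Z := fun p =>
  match p with
  | (none, x) => φ x
  | (some s, x) => actZ s (φ x)

theorem fZ_pre (hZ : IsGlobalAction G domZ actZ) {φ : X → Z}
    (hφ : IsMorphism G dom act domZ actZ φ) {p q : Option S × X}
    (h : preRel G dom act p q) : fZ actZ φ p = fZ actZ φ q := by
  rcases h with ⟨s, x, hx, rfl, rfl⟩ | ⟨t, u, x, htu, hx, rfl, rfl⟩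
  · exact (hφ s).2 x hx
  · show actZ (G.mul t u) (φ x) = actZ t (φ (act u x))
    rw [(hφ u).2 x hx]
    have hu : φ x ∈ domZ u := (hφ u).1 x hx
    have : φ x ∈ domZ u ∩ domZ (G.mul t u) := ⟨hu, (hZ.2.2 t u htu) ▸ hu⟩
    exact (hZ.1.2 t u htu (φ x) this).symm

theorem fZ_eqv (hZ : IsGlobalAction G domZ actZ) {φ : X → Z}
    (hφ : IsMorphism G dom act domZ actZ φ) {p q : Option S × X}
    (h : approx G dom act p q) : fZ actZ φ p = fZ actZ φ q := by
  induction h with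
  | rel _ _ h => exact fZ_pre G dom act domZ actZ hZ hφ h
  | refl => rfl
  | symm _ _ _ ih => exact ih.symm
  | trans _ _ _ _ _ ih1 ih2 => exact ih1.trans ih2

end Global

end Aux

end Semigroupoid

open Semigroupoid in
/-- The triple `(δ,β,E)` is a universal globalization of `(α,X)`: `δ(x) = [δ,x]` is an
embedding of partial actions, and every morphism from `(α,X)` into a global action factors
uniquely through `δ`. -/
theorem statement16 {S : Type u} {X : Type v} (G : Semigroupoid S)
    (dom : S → Set X) (act : S → X → X) (hα : IsPartialAction G dom act)
    (βE : S → EType G dom act → EType G dom act)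
    (hspec1 : ∀ (s t : S) (y : X), G.comp s t →
      ∀ hD : ((some t : Option S), y) ∈ DSet G dom act,
        ∃ hD' : ((some (G.mul s t) : Option S), y) ∈ DSet G dom act,
          βE s (mkE G dom act ⟨(some t, y), hD⟩) =
            mkE G dom act ⟨(some (G.mul s t), y), hD'⟩)
    (hspec2 : ∀ (s : S) (x : X), x ∈ rhoDom G dom act s →
      ∃ hD' : ((some s : Option S), x) ∈ DSet G dom act,
        βE s (deltaMap G dom act x) = mkE G dom act ⟨(some s, x), hD'⟩)
    (hglob : IsGlobalAction G (domE G dom act) βE) :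
    IsEmbedding G dom act (domE G dom act) βE (deltaMap G dom act) ∧
    ∀ (Z : Type w) (domZ : S → Set Z) (actZ : S → Z → Z),
      IsGlobalAction G domZ actZ →
        ∀ φ : X → Z, IsMorphism G dom act domZ actZ φ →
          ∃! Φ : EType G dom act → Z,
            IsMorphism G (domE G dom act) βE domZ actZ Φ ∧
              Φ ∘ deltaMap G dom act = φ := by
  -- injectivity of δ
  have hinj : Function.Injective (deltaMap G dom act) := by
    intro x y h
    have := einv_eqv G dom act hα (mkE_exact G dom act h)
    simpa [Einv] using this
  constructor
  · refine ⟨hinj, ?_, ?_⟩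
    · -- δ is a morphism
      intro s
      constructor
      · intro x hx
        exact Or.inr ⟨x, mem_rhoDom_self G dom act hx, rfl⟩
      · intro x hx
        obtain ⟨hD', hEq⟩ := hspec2 s x (mem_rhoDom_self G dom act hx)
        rw [hEq]
        exact mkE_eq G dom act (approx_delta G dom act hx)
    · -- embedding condition
      intro s
      ext x
      constructor
      · intro hx
        refine ⟨Or.inr ⟨x, mem_rhoDom_self G dom act hx, rfl⟩, ?_⟩
        obtain ⟨hD', hEq⟩ := hspec2 s x (mem_rhoDom_self G dom act hx)
        refine ⟨act s x, ?_⟩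
        rw [hEq]
        exact mkE_eq G dom act (p := ⟨(none, act s x), noneMem G dom act (act s x)⟩)
          (q := ⟨(some s, x), hD'⟩) (approx_delta G dom act hx)
      · rintro ⟨hdom, z, hz⟩
        -- first, x ∈ rhoDom s
        have hrho : x ∈ rhoDom G dom act s := by
          rcases hdom with ⟨p, t, y, hst, happ, hp⟩ | ⟨x', hx', he⟩
          · have h1 : approx G dom act (none, x) (some t, y) :=
              Relation.EqvGen.trans _ _ _ (mkE_exact G dom act hp) happ
            have h2 := einv_eqv G dom act hα h1
            classical
            by_cases hyt : y ∈ dom t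
            · have hxy : x = act t y := by
                simpa [Einv, hyt] using h2
              exact hxy ▸ Or.inr ⟨t, hst, ⟨y, hyt, rfl⟩⟩
            · exfalso
              simp [Einv, hyt] at h2
          · have : x = x' := hinj he
            exact this ▸ hx'
        obtain ⟨hD', hEq⟩ := hspec2 s x hrho
        rw [hEq] at hz
        have h3 := einv_eqv G dom act hα (mkE_exact G dom act hz)
        classical
        by_cases hxs : x ∈ dom s
        · exact hxs
        · exfalso
          simp [Einv, hxs] at h3
  · -- universal property
    intro Z domZ actZ hZ φ hφ
    -- the factorization
    refine ⟨Quotient.lift (fun p => fZ actZ φ p.val)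
      (fun p q h => fZ_eqv G dom act domZ actZ hZ hφ h), ⟨?_, ?_⟩, ?_⟩
    · -- Φ is a morphism
      intro s
      constructor
      · rintro e (⟨p, t, y, hst, happ, rfl⟩ | ⟨x, hx, rfl⟩)
        · have hy : y ∈ rhoDom G dom act t :=
            (((eqv_mem_DSet G dom act happ).mp p.2) t rfl)
          have h1 : Quotient.lift (fun p => fZ actZ φ p.val)
              (fun p q h => fZ_eqv G dom act domZ actZ hZ hφ h) (mkE G dom act p)
              = actZ t (φ y) := fZ_eqv G dom act domZ actZ hZ hφ happ
          rw [h1]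
          exact actZ_mem G domZ actZ hZ hst
            (phi_mem G dom act domZ actZ hZ hφ hy)
        · exact phi_mem G dom act domZ actZ hZ hφ hx
      · rintro e (⟨p, t, y, hst, happ, rfl⟩ | ⟨x, hx, rfl⟩)
        · have hq : ((some t, y) : Option S × X) ∈ DSet G dom act :=
            (eqv_mem_DSet G dom act happ).mp p.2
          have hy : y ∈ rhoDom G dom act t := hq t rfl
          have hpe : mkE G dom act p = mkE G dom act ⟨(some t, y), hq⟩ :=
            mkE_eq G dom act happ
          obtain ⟨hD', hEq⟩ := hspec1 s t y hst hq
          rw [hpe, hEq]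
          show actZ (G.mul s t) (φ y) = actZ s (actZ t (φ y))
          have hu : φ y ∈ domZ t := phi_mem G dom act domZ actZ hZ hφ hy
          exact (hZ.1.2 s t hst (φ y) ⟨hu, (hZ.2.2 s t hst) ▸ hu⟩).symm
        · obtain ⟨hD', hEq⟩ := hspec2 s x hx
          rw [show (mkE G dom act ⟨(none, x), noneMem G dom act x⟩ : EType G dom act)
            = deltaMap G dom act x from rfl, hEq]
          rfl
    · -- Φ ∘ δ = φ
      funext x
      rfl
    · -- uniqueness
      intro Φ' ⟨hΦ'm, hΦ'δ⟩
      funext e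
      induction e using Quotient.ind with
      | _ p =>
        obtain ⟨⟨a, x⟩, hp⟩ := p
        cases a with
        | none =>
          show Φ' (deltaMap G dom act x) = φ x
          exact congrFun hΦ'δ x
        | some s =>
          show Φ' (mkE G dom act ⟨(some s, x), hp⟩) = actZ s (φ x)
          have hx : x ∈ rhoDom G dom act s := hp s rfl
          obtain ⟨hD', hEq⟩ := hspec2 s x hx
          have hdel : deltaMap G dom act x ∈ domE G dom act s :=
            Or.inr ⟨x, hx, rfl⟩
          have hφx : Φ' (deltaMap G dom act x) = φ x := congrFun hΦ'δ x
          calc Φ' (mkE G dom act ⟨(some s, x), hp⟩)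
              = Φ' (βE s (deltaMap G dom act x)) := by rw [hEq]
            _ = actZ s (Φ' (deltaMap G dom act x)) := (hΦ'm s).2 _ hdel
            _ = actZ s (φ x) := by rw [hφx]
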